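/- Let A be a finite alphabet, S a finite semigroup, and φ: A⁺ → S a surjective homomorphism from the free semigroup on A. Then for every P ∈ 𝒞𝒫_∅(S) there exists a function α assigning to each p ∈ P a κ-term α(p) over A such that: (i) for every p ∈ P, the term α(p) evaluates to p in S under the letter assignment given by φ restricted to A; and (ii) for every finite aperiodic semigroup T and every map from A to T, all the terms α(p), p ∈ P, evaluate to one and the same element of T. -/

import Mathlib

open Pointwise

/-- `spow s n` is the power `s^(n+1)` of `s`, defined in any magma. -/
def spow {S : Type*} [Mul S] (s : S) (n : ℕ) : S := (fun x => x * s)^[n] s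

/-- The cyclic subsemigroup of `P(S)` generated by the subset `P`, namely the
collection of all setwise powers `P, P², P³, …` of `P`. -/
def cyclicSetPowers {S : Type} [Semigroup S] (P : Set S) : Set (Set S) :=
  Set.range (spow P)

/-- A subset `G` of a semigroup is a group under the induced multiplication:
it is closed under multiplication, has a two-sided identity element, and every
element has a two-sided inverse. -/
def IsGroupSet {M : Type*} [Mul M] (G : Set M) : Prop :=
  (∀ x ∈ G, ∀ y ∈ G, x * y ∈ G) ∧
    ∃ e ∈ G, (∀ x ∈ G, e * x = x ∧ x * e = x) ∧
      ∀ x ∈ G, ∃ y ∈ G, x * y = e ∧ y * x = e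

/-- `𝒞𝒫_∅(S)`: the smallest collection of nonempty subsets of `S` containing
the singletons, closed under setwise products and nonempty subsets, and
containing `⋃_{n ≥ 1} Pⁿ` whenever it contains a set `P` such that the
subsemigroup of `P(S)` generated by `P` is a cyclic group. -/
inductive CPempty {S : Type} [Semigroup S] : Set S → Prop
  | singleton (s : S) : CPempty {s}
  | mul {P Q : Set S} : CPempty P → CPempty Q → CPempty (P * Q)
  | subset {P Q : Set S} : CPempty P → Q ⊆ P → Q.Nonempty → CPempty Q
  | group {P : Set S} : CPempty P → IsGroupSet (cyclicSetPowers P) →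
      CPempty (⋃ n : ℕ, spow P n)

/-- A finite semigroup is aperiodic if for every element `s` there is `m` with
`s^m = s^(m+1)`. -/
def IsAperiodic (T : Type) [Semigroup T] : Prop :=
  ∀ t : T, ∃ m : ℕ, spow t m = spow t (m + 1)

/-- κ-terms over the alphabet `A`: letters, binary multiplication and the
unary `(ω-1)`-power. -/
inductive KTerm (A : Type) : Type
  | letter : A → KTerm A
  | mul : KTerm A → KTerm A → KTerm A
  | ommPow : KTerm A → KTerm A

/-- The evaluation relation for κ-terms in a semigroup `T`, given an assignment
`f` of letters.  The `(ω-1)`-power of an element `s` is the element `g` of the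
cyclic subsemigroup generated by `s` such that `g * s = s * g = e` and
`g * e = g`, where `e` is the (unique, in a finite semigroup) idempotent power
`s^ω` of `s`. -/
inductive KEval {A T : Type} [Semigroup T] (f : A → T) : KTerm A → T → Prop
  | letter (a : A) : KEval f (KTerm.letter a) (f a)
  | mul {u v : KTerm A} {s t : T} :
      KEval f u s → KEval f v t → KEval f (KTerm.mul u v) (s * t)
  | ommPow {u : KTerm A} {s e g : T} :
      KEval f u s →
      IsIdempotentElem e → (∃ n : ℕ, spow s n = e) →
      (∃ n : ℕ, spow s n = g) →
      g * s = e → s * g = e → g * e = g →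
      KEval f (KTerm.ommPow u) g

section Aux

lemma spow_zero {S : Type*} [Mul S] (s : S) : spow s 0 = s := rfl

lemma spow_succ {S : Type*} [Mul S] (s : S) (n : ℕ) : spow s (n + 1) = spow s n * s :=
  Function.iterate_succ_apply' _ n s

lemma spow_add {S : Type*} [Semigroup S] (s : S) (a b : ℕ) :
    spow s a * spow s b = spow s (a + b + 1) := by
  induction b with
  | zero => rw [spow_zero, ← spow_succ]
  | succ b ih =>
      rw [spow_succ, ← mul_assoc, ih, ← spow_succ]
      congr 1 <;> omega

lemma spow_spow {S : Type*} [Semigroup S] (s : S) (a b : ℕ) :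
    spow (spow s a) b = spow s (a * b + a + b) := by
  induction b with
  | zero => simp [spow_zero]
  | succ b ih =>
      rw [spow_succ, ih, spow_add]
      congr 1
      ring

lemma spow_stab {T : Type*} [Semigroup T] {t : T} {m : ℕ}
    (h : spow t m = spow t (m + 1)) : ∀ k, m ≤ k → spow t k = spow t m := by
  intro k hk
  induction k with
  | zero =>
      have h0 : m = 0 := by omega
      rw [h0]
  | succ k ih =>
      rcases Nat.lt_or_ge m (k+1) with h1 | h1
      · have hmk : m ≤ k := by omega
        rw [spow_succ, ih hmk, ← spow_succ, ← h]
      · have : m = k + 1 := by omega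
        rw [this]

def listProd {S : Type*} [Mul S] (v : S) (l : List S) : S := l.foldl (· * ·) v

lemma listProd_append {S : Type*} [Mul S] (v : S) (l₁ l₂ : List S) :
    listProd v (l₁ ++ l₂) = listProd (listProd v l₁) l₂ := List.foldl_append ..

lemma mul_listProd {S : Type*} [Semigroup S] (a : S) : ∀ (l : List S) (v : S),
    a * listProd v l = listProd (a * v) l
  | [], v => rfl
  | y :: l, v => by
      show a * listProd (v * y) l = listProd (a * v * y) l
      rw [mul_listProd a l (v * y), mul_assoc]

lemma listProd_spow_const {T σ : Type*} [Semigroup T] (t : T) :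
    ∀ (l : List σ) (a : ℕ),
      listProd (spow t a) (l.map fun _ => t) = spow t (a + l.length)
  | [], a => by simp [listProd]
  | y :: l, a => by
      show listProd (spow t a * t) (l.map fun _ => t) = _
      rw [← spow_succ, listProd_spow_const t l (a + 1)]
      congr 1
      simp; omega

def chainTerm {A : Type} (b : KTerm A) (l : List (KTerm A)) : KTerm A := l.foldl .mul b

lemma keval_chain {A T : Type} {σ : Type} [Semigroup T] {f : A → T}
    (θ : σ → KTerm A) (ρ : σ → T) :
    ∀ (l : List σ) (b : KTerm A) (v : T), KEval f b v →
      (∀ y ∈ l, KEval f (θ y) (ρ y)) →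
      KEval f (chainTerm b (l.map θ)) (listProd v (l.map ρ))
  | [], b, v, hb, _ => hb
  | y :: l, b, v, hb, hl =>
      keval_chain θ ρ l (.mul b (θ y)) (v * ρ y)
        (KEval.mul hb (hl y List.mem_cons_self))
        (fun z hz => hl z (List.mem_cons_of_mem _ hz))

lemma mem_spow_list {S : Type*} [Semigroup S] {P : Set S} :
    ∀ (n : ℕ) (x : S), x ∈ spow P n →
      ∃ (p : S) (l : List S), p ∈ P ∧ (∀ y ∈ l, y ∈ P) ∧ l.length = n ∧ x = listProd p l
  | 0, x, hx => ⟨x, [], hx, by simp, rfl, rfl⟩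
  | n + 1, x, hx => by
      rw [spow_succ] at hx
      obtain ⟨y, hy, q, hq, hyq⟩ := Set.mem_mul.mp hx
      obtain ⟨p, l, hp, hl, hlen, hprod⟩ := mem_spow_list n y hy
      refine ⟨p, l ++ [q], hp, ?_, by simp [hlen], ?_⟩
      · intro z hz
        rcases List.mem_append.mp hz with h | h
        · exact hl z h
        · simp at h; subst h; exact hq
      · rw [listProd_append, ← hprod]
        show x = y * q
        exact hyq.symm

lemma exists_omm {S : Type*} [Semigroup S] [Finite S] (z : S) :
    ∃ e g : S, IsIdempotentElem e ∧ (∃ n, spow z n = e) ∧ (∃ n, spow z n = g) ∧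
      g * z = e ∧ z * g = e ∧ g * e = g := by
  obtain ⟨i, j, hne, hij⟩ := Finite.exists_ne_map_eq_of_infinite (spow z)
  have hex : ∃ i p : ℕ, 0 < p ∧ spow z (i + p) = spow z i := by
    rcases lt_or_gt_of_ne hne with h | h
    · exact ⟨i, j - i, by omega, by rw [show i + (j - i) = j from by omega, hij]⟩
    · exact ⟨j, i - j, by omega, by rw [show j + (i - j) = i from by omega, ← hij]⟩
  clear hne hij
  obtain ⟨i, p, hp, hiter⟩ := hex
  have hstep : ∀ c, spow z (i + c + p) = spow z (i + c) := by
    intro c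
    induction c with
    | zero => simpa using hiter
    | succ c ih =>
        rw [show i + (c+1) + p = (i + c + p) + 1 from by omega, spow_succ, ih, ← spow_succ]
        congr 1 <;> omega
  have hmult : ∀ c b, spow z (i + c + b * p) = spow z (i + c) := by
    intro c b
    induction b with
    | zero => simp
    | succ b ih =>
        have h1 := hstep (c + b * p)
        rw [show i + c + (b+1) * p = i + (c + b * p) + p from by ring, h1,
            show i + (c + b * p) = i + c + b * p from by ring, ih]
  have key : ∀ a b, i ≤ a → spow z (a + b * p) = spow z a := by
    intro a b ha
    have := hmult (a - i) b
    rwa [show i + (a - i) = a from by omega] at this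
  obtain ⟨q, hq1, hqmul⟩ : ∃ q, i + 1 ≤ q ∧ ∀ a b, i ≤ a → spow z (a + b * q) = spow z a := by
    refine ⟨(i + 1) * p, Nat.le_mul_of_pos_right _ hp, fun a b ha => ?_⟩
    have := key a (b * (i + 1)) ha
    rwa [show b * (i+1) * p = b * ((i+1) * p) from by ring] at this
  refine ⟨spow z (q - 1), spow z (2 * q - 2), ?_, ⟨q - 1, rfl⟩, ⟨2 * q - 2, rfl⟩, ?_, ?_, ?_⟩
  · show spow z (q-1) * spow z (q-1) = spow z (q-1)
    rw [spow_add, show q - 1 + (q - 1) + 1 = (q - 1) + 1 * q from by omega]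
    exact hqmul _ 1 (by omega)
  · rw [← spow_succ, show 2 * q - 2 + 1 = (q - 1) + 1 * q from by omega]
    exact hqmul _ 1 (by omega)
  · show spow z 0 * spow z (2 * q - 2) = spow z (q - 1)
    rw [spow_add, show 0 + (2 * q - 2) + 1 = (q - 1) + 1 * q from by omega]
    exact hqmul _ 1 (by omega)
  · rw [spow_add, show 2 * q - 2 + (q - 1) + 1 = (2 * q - 2) + 1 * q from by omega]
    exact hqmul _ 1 (by omega)

end Aux


section Aux2

lemma si_spow {S : Type*} [Semigroup S] {si c : S} (h : si * c = si) :
    ∀ k, si * spow c k = si := by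
  intro k
  induction k with
  | zero => exact h
  | succ k ih => rw [spow_succ, ← mul_assoc, ih, h]

lemma splice_term {S : Type} [Semigroup S] [Finite S] {A : Type} {fS : A → S}
    (θ : S → KTerm A) (p : S) (l : List S)
    (hS : KEval fS (θ p) p) (hSl : ∀ y ∈ l, KEval fS (θ y) y)
    {i j : ℕ} (hij : i < j) (hjle : j ≤ l.length)
    (heq : listProd p (l.take i) = listProd p (l.take j)) :
    ∃ term : KTerm A, KEval fS term (listProd p l) ∧
      ∀ (T : Type) [Semigroup T] (f : A → T) (t : T),
        KEval f (θ p) t → (∀ y ∈ l, KEval f (θ y) t) →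
        ∀ m : ℕ, (∀ k, m ≤ k → spow t k = spow t m) →
        KEval f term (spow t m) := by
  have htakej : l.take j = l.take i ++ (l.drop i).take (j - i) := by
    rw [show j = i + (j - i) from by omega, List.take_add]
    rw [show i + (j - i) - i = j - i from by omega]
  have hmidlen : ((l.drop i).take (j - i)).length = j - i := by
    simp only [List.length_take, List.length_drop]
    omega
  have hmidne : (l.drop i).take (j - i) ≠ [] := by
    intro h0
    rw [h0] at hmidlen
    simp at hmidlen
    omega
  obtain ⟨m₀, ms, hmid⟩ := List.exists_cons_of_ne_nil hmidne
  -- memberships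
  have hmidsub : ∀ y ∈ (l.drop i).take (j - i), y ∈ l :=
    fun y hy => List.drop_subset i l (List.take_subset _ _ hy)
  have hm₀l : m₀ ∈ l := hmidsub m₀ (by rw [hmid]; exact List.mem_cons_self)
  have hmsl : ∀ y ∈ ms, y ∈ l := fun y hy =>
    hmidsub y (by rw [hmid]; exact List.mem_cons_of_mem _ hy)
  -- key S-side products
  have hsij : listProd p (l.take j) = listProd p (l.take i) * listProd m₀ ms := by
    rw [htakej, listProd_append, hmid]
    exact (mul_listProd _ ms m₀).symm
  have hsc : listProd p (l.take i) * listProd m₀ ms = listProd p (l.take i) := by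
    rw [← hsij, ← heq]
  have hxr : listProd p l = listProd (listProd p (l.take i)) (l.drop j) := by
    have h1 := listProd_append p (l.take j) (l.drop j)
    rw [List.take_append_drop] at h1
    rw [h1, ← heq]
  -- the term
  refine ⟨chainTerm
      (.mul (.mul (chainTerm (θ p) ((l.take i).map θ)) (.ommPow (chainTerm (θ m₀) (ms.map θ))))
        (chainTerm (θ m₀) (ms.map θ)))
      ((l.drop j).map θ), ?_, ?_⟩
  · -- evaluation in S
    have hpre : KEval fS (chainTerm (θ p) ((l.take i).map θ)) (listProd p (l.take i)) := by
      have := keval_chain θ id (l.take i) (θ p) p hS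
        (fun y hy => hSl y (List.take_subset _ _ hy))
      simpa using this
    have hcT : KEval fS (chainTerm (θ m₀) (ms.map θ)) (listProd m₀ ms) := by
      have := keval_chain θ id ms (θ m₀) m₀ (hSl m₀ hm₀l) (fun y hy => hSl y (hmsl y hy))
      simpa using this
    obtain ⟨e, g, hid, ⟨ne, hne⟩, hgn, hgz, hzg, hge⟩ := exists_omm (listProd m₀ ms)
    have homm : KEval fS (.ommPow (chainTerm (θ m₀) (ms.map θ))) g :=
      KEval.ommPow hcT hid ⟨ne, hne⟩ hgn hgz hzg hge
    have hbase : KEval fS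
        (.mul (.mul (chainTerm (θ p) ((l.take i).map θ)) (.ommPow (chainTerm (θ m₀) (ms.map θ))))
          (chainTerm (θ m₀) (ms.map θ)))
        ((listProd p (l.take i) * g) * listProd m₀ ms) :=
      KEval.mul (KEval.mul hpre homm) hcT
    have hval : (listProd p (l.take i) * g) * listProd m₀ ms = listProd p (l.take i) := by
      rw [mul_assoc, hgz, ← hne]
      exact si_spow hsc ne
    rw [hval] at hbase
    have hfin := keval_chain θ id (l.drop j) _ _ hbase
      (fun y hy => hSl y (List.drop_subset _ _ hy))
    rw [hxr]
    simpa using hfin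
  · -- evaluation in aperiodic T
    intro T _ f t ht htl m hm
    have hpre : KEval f (chainTerm (θ p) ((l.take i).map θ)) (spow t (l.take i).length) := by
      have := keval_chain θ (fun _ => t) (l.take i) (θ p) t ht
        (fun y hy => htl y (List.take_subset _ _ hy))
      have h2 := listProd_spow_const t (l.take i) 0
      rw [spow_zero] at h2
      rw [h2] at this
      simpa using this
    have hcT : KEval f (chainTerm (θ m₀) (ms.map θ)) (spow t ms.length) := by
      have := keval_chain θ (fun _ => t) ms (θ m₀) t (htl m₀ hm₀l)
        (fun y hy => htl y (hmsl y hy))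
      have h2 := listProd_spow_const t ms 0
      rw [spow_zero] at h2
      rw [h2] at this
      simpa using this
    have hidem : IsIdempotentElem (spow t m) := by
      show spow t m * spow t m = spow t m
      rw [spow_add]
      exact hm _ (by omega)
    have hcyc : ∃ nn, spow (spow t ms.length) nn = spow t m := by
      refine ⟨m, ?_⟩
      rw [spow_spow]
      exact hm _ (by omega)
    have homm : KEval f (.ommPow (chainTerm (θ m₀) (ms.map θ))) (spow t m) := by
      refine KEval.ommPow hcT hidem hcyc hcyc ?_ ?_ ?_
      · rw [spow_add]; exact hm _ (by omega)
      · rw [spow_add]; exact hm _ (by omega)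
      · rw [spow_add]
        exact hm _ (by omega)
    have hbase : KEval f
        (.mul (.mul (chainTerm (θ p) ((l.take i).map θ)) (.ommPow (chainTerm (θ m₀) (ms.map θ))))
          (chainTerm (θ m₀) (ms.map θ)))
        (spow t ((l.take i).length + m + 1 + ms.length + 1)) := by
      have h1 : KEval f _ ((spow t (l.take i).length * spow t m) * spow t ms.length) :=
        KEval.mul (KEval.mul hpre homm) hcT
      rw [spow_add, spow_add] at h1
      exact h1
    have hfin := keval_chain θ (fun _ => t) (l.drop j) _ _ hbase
      (fun y hy => htl y (List.drop_subset _ _ hy))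
    rw [listProd_spow_const] at hfin
    rw [hm _ (by omega)] at hfin
    exact hfin

end Aux2


section Aux3

lemma exists_period {S : Type} [Semigroup S] {P : Set S}
    (h : IsGroupSet (cyclicSetPowers P)) :
    ∃ d : ℕ, 1 ≤ d ∧ ∀ k, spow P (k + d) = spow P k := by
  obtain ⟨-, E, hE, hid, -⟩ := h
  obtain ⟨k, hk⟩ := hE
  have h0 : spow P 0 * E = spow P 0 := (hid (spow P 0) ⟨0, rfl⟩).2
  rw [← hk, spow_add] at h0
  refine ⟨k + 1, by omega, ?_⟩
  intro n
  induction n with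
  | zero => simpa using h0
  | succ n ih =>
      rw [show n + 1 + (k + 1) = (n + (k + 1)) + 1 from by omega, spow_succ, ih, ← spow_succ]

lemma group_term {S : Type} [Semigroup S] [Finite S] {A : Type} {fS : A → S}
    {P : Set S} (α : P → KTerm A) (hα : ∀ q : P, KEval fS (α q) (q : S))
    {d : ℕ} (hd : 1 ≤ d) (hper : ∀ k, spow P (k + d) = spow P k)
    {x : S} {n : ℕ} (hx : x ∈ spow P n) :
    ∃ term : KTerm A, KEval fS term x ∧
      ∀ (T : Type) [Semigroup T] (f : A → T) (t : T),
        (∀ q : P, KEval f (α q) t) →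
        ∀ m : ℕ, (∀ k, m ≤ k → spow t k = spow t m) →
        KEval f term (spow t m) := by
  classical
  have hSne : Nonempty S := ⟨x⟩
  have hFT := Fintype.ofFinite S
  have hmultper : ∀ jj kk, spow P (kk + jj * d) = spow P kk := by
    intro jj kk
    induction jj with
    | zero => simp
    | succ jj ih =>
        rw [show kk + (jj + 1) * d = (kk + jj * d) + d from by ring, hper, ih]
  have hx' : x ∈ spow P (n + Fintype.card S * d) := by rw [hmultper]; exact hx
  obtain ⟨p, l, hp, hl, hlen, hxeq⟩ := mem_spow_list _ _ hx'
  have hlenK : Fintype.card S < l.length + 1 := by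
    have h1 : Fintype.card S * 1 ≤ Fintype.card S * d := Nat.mul_le_mul_left _ hd
    have h2 : 0 < Fintype.card S := Fintype.card_pos
    omega
  obtain ⟨a, b, hab, hfab⟩ :=
    Fintype.exists_ne_map_eq_of_card_lt
      (fun i : Fin (l.length + 1) => listProd p (l.take i)) (by simpa using hlenK)
  have hcases : ∃ i j : ℕ, i < j ∧ j ≤ l.length ∧
      listProd p (l.take i) = listProd p (l.take j) := by
    rcases lt_or_gt_of_ne (fun hv => hab (Fin.val_injective hv)) with h | h
    · exact ⟨a, b, h, Nat.lt_succ_iff.mp b.isLt, hfab⟩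
    · exact ⟨b, a, h, Nat.lt_succ_iff.mp a.isLt, hfab.symm⟩
  obtain ⟨i, j, hij, hjle, heq⟩ := hcases
  set θ : S → KTerm A := fun y => if hy : y ∈ P then α ⟨y, hy⟩ else α ⟨p, hp⟩ with hθ
  have hθP : ∀ (y : S) (hy : y ∈ P), θ y = α ⟨y, hy⟩ := fun y hy => dif_pos hy
  have hθS : ∀ y ∈ l, KEval fS (θ y) y := by
    intro y hy
    rw [hθP y (hl y hy)]
    exact hα ⟨y, hl y hy⟩
  have hθSp : KEval fS (θ p) p := by rw [hθP p hp]; exact hα ⟨p, hp⟩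
  obtain ⟨term, h1, h2⟩ := splice_term θ p l hθSp hθS hij hjle heq
  refine ⟨term, by rw [hxeq]; exact h1, ?_⟩
  intro T _ f t ht m hm
  refine h2 T f t ?_ ?_ m hm
  · rw [hθP p hp]; exact ht ⟨p, hp⟩
  · intro y hy
    rw [hθP y (hl y hy)]
    exact ht ⟨y, hl y hy⟩

lemma word_term {A : Type} (w : FreeSemigroup A) :
    ∃ term : KTerm A, ∀ (T : Type) [Semigroup T] (ψ : FreeSemigroup A →ₙ* T),
      KEval (fun a => ψ (FreeSemigroup.of a)) term (ψ w) := by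
  refine FreeSemigroup.recOnMul w ?_ ?_
  · intro a
    exact ⟨.letter a, fun T _ ψ => KEval.letter a⟩
  · intro u v ihu ihv
    obtain ⟨tu, hu⟩ := ihu
    obtain ⟨tv, hv⟩ := ihv
    refine ⟨.mul tu tv, fun T _ ψ => ?_⟩
    rw [map_mul]
    exact KEval.mul (hu T ψ) (hv T ψ)

end Aux3


/-- Every member `P` of `𝒞𝒫_∅(S)` admits a function `α` assigning to each
`p ∈ P` a κ-term over `A` which evaluates to `p` in `S` under the letter
assignment induced by `φ`, and such that in every finite aperiodic semigroup
`T`, under any assignment of the letters, all the terms `α p` evaluate to one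
and the same element of `T`. -/
theorem CPempty_kappa_witnessed
    {S : Type} [Semigroup S] [Finite S]
    {A : Type} [Finite A]
    (φ : FreeSemigroup A →ₙ* S) (hφ : Function.Surjective φ)
    (P : Set S) (hP : CPempty P) :
    ∃ α : P → KTerm A,
      (∀ p : P, KEval (fun a => φ (FreeSemigroup.of a)) (α p) (p : S)) ∧
      (∀ (T : Type) [Semigroup T] [Finite T], IsAperiodic T →
        ∀ f : A → T, ∃ t : T, ∀ p : P, KEval f (α p) t) := by
  classical
  induction hP with
  | singleton s =>
      obtain ⟨w, hw⟩ := hφ s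
      obtain ⟨term, hterm⟩ := word_term w
      refine ⟨fun _ => term, ?_, ?_⟩
      · intro p
        have hps : (p : S) = s := p.2
        have h := hterm S φ
        rw [hw] at h
        rw [hps]
        exact h
      · intro T _ _ hT f
        refine ⟨FreeSemigroup.lift f w, fun p => ?_⟩
        have := hterm T (FreeSemigroup.lift f)
        simpa [FreeSemigroup.lift_of] using this
  | @mul P' Q' hP' hQ' ihP ihQ =>
      obtain ⟨α, hαS, hαT⟩ := ihP
      obtain ⟨β, hβS, hβT⟩ := ihQ
      have hdec : ∀ r : ↥(P' * Q'), ∃ (pq : ↥P' × ↥Q'), (pq.1 : S) * (pq.2 : S) = (r : S) := by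
        intro r
        obtain ⟨p, hp, q, hq, hpq⟩ := Set.mem_mul.mp r.2
        exact ⟨(⟨p, hp⟩, ⟨q, hq⟩), hpq⟩
      choose pq hpq using hdec
      refine ⟨fun r => .mul (α (pq r).1) (β (pq r).2), ?_, ?_⟩
      · intro r
        rw [← hpq r]
        exact KEval.mul (hαS _) (hβS _)
      · intro T _ _ hT f
        obtain ⟨t1, h1⟩ := hαT T hT f
        obtain ⟨t2, h2⟩ := hβT T hT f
        exact ⟨t1 * t2, fun r => KEval.mul (h1 _) (h2 _)⟩
  | subset hP' hsub hne ih =>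
      obtain ⟨α, h1, h2⟩ := ih
      refine ⟨fun q => α ⟨(q : S), hsub q.2⟩, fun q => h1 _, ?_⟩
      intro T _ _ hT f
      obtain ⟨t, ht⟩ := h2 T hT f
      exact ⟨t, fun q => ht _⟩
  | @group P' hP' hgrp ih =>
      obtain ⟨α, hαS, hαT⟩ := ih
      obtain ⟨d, hd, hper⟩ := exists_period hgrp
      have key : ∀ x : ↥(⋃ n : ℕ, spow P' n), ∃ term : KTerm A,
          KEval (fun a => φ (FreeSemigroup.of a)) term (x : S) ∧
          ∀ (T : Type) [Semigroup T] (f : A → T) (t : T),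
            (∀ q : P', KEval f (α q) t) →
            ∀ m : ℕ, (∀ k, m ≤ k → spow t k = spow t m) →
            KEval f term (spow t m) := by
        intro x
        obtain ⟨n, hn⟩ := Set.mem_iUnion.mp x.2
        exact group_term α hαS hd hper hn
      choose γ h1 h2 using key
      refine ⟨γ, h1, ?_⟩
      intro T _ _ hT f
      obtain ⟨t, ht⟩ := hαT T hT f
      obtain ⟨m, hm⟩ := hT t
      exact ⟨spow t m, fun x => h2 x T f t ht m (spow_stab hm)⟩
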